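/- Suppose that both condition C1 and condition C2 hold at infinitely many iterations. Then the series ∑_{k=1}^∞ Δ_k converges. -/

import Mathlib

/-- If both conditions `C1` and `C2` hold at infinitely many iterations
(case `S3`), then the series `∑_{k=1}^∞ Δ k` converges. -/
theorem residual_series_converges_case_S3
    (Δ ρ : ℕ → ℝ) (γ η c : ℝ)
    (hΔpos : ∀ k, 1 ≤ k → 0 < Δ k) (hρpos : ∀ k, 1 ≤ k → 0 < ρ k)
    (hγ : 1 < γ) (hη0 : 0 < η) (hη1 : η < 1) (hc : 0 < c)
    (hrule1 : ∀ k, 1 ≤ k → η * Δ k ≤ Δ (k + 1) → ρ (k + 1) = γ * ρ k)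
    (hrule2 : ∀ k, 1 ≤ k → Δ (k + 1) < η * Δ k → ρ (k + 1) = ρ k)
    (hlem : ∀ k, 1 ≤ k → η * Δ k ≤ Δ (k + 1) → Δ (k + 1) ≤ c / Real.sqrt (ρ k))
    (hinf1 : {k : ℕ | 1 ≤ k ∧ η * Δ k ≤ Δ (k + 1)}.Infinite)
    (hinf2 : {k : ℕ | 1 ≤ k ∧ Δ (k + 1) < η * Δ k}.Infinite) :
    ∃ S : ℝ, Filter.Tendsto (fun N => ∑ k ∈ Finset.Icc 1 N, Δ k)
      Filter.atTop (nhds S) := by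
  set q := Real.sqrt γ with hq
  have hq1 : 1 < q := by
    have : Real.sqrt 1 < Real.sqrt γ := Real.sqrt_lt_sqrt (by norm_num) hγ
    simpa using this
  have hη' : 0 < 1 - η := by linarith
  have hq0 : 0 < q := by linarith
  have hqq : 0 < 1 - 1 / q := by
    have : 1 / q < 1 := by rw [div_lt_one hq0]; linarith
    linarith
  set K := c / ((1 - η) * (1 - 1 / q)) with hK
  have hKpos : 0 < K := div_pos hc (mul_pos hη' hqq)
  set V : ℕ → ℝ := fun k => (∑ j ∈ Finset.Icc 2 k, Δ j) + Δ k * (η / (1 - η))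
      + K / Real.sqrt (ρ k) with hV
  have hstep : ∀ k, 1 ≤ k → V (k + 1) ≤ V k := by
    intro k hk
    have hρk := hρpos k hk
    have hsρ : 0 < Real.sqrt (ρ k) := Real.sqrt_pos.mpr hρk
    have hΔk := hΔpos k hk
    have hsum : ∑ j ∈ Finset.Icc 2 (k + 1), Δ j
        = (∑ j ∈ Finset.Icc 2 k, Δ j) + Δ (k + 1) := by
      rw [Finset.sum_Icc_succ_top (by omega)]
    rcases le_or_gt (η * Δ k) (Δ (k + 1)) with h1 | h2
    · have hρ' := hrule1 k hk h1
      have hlem' := hlem k hk h1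
      have hs' : Real.sqrt (ρ (k + 1)) = q * Real.sqrt (ρ k) := by
        rw [hρ', Real.sqrt_mul (by linarith)]
      simp only [hV, hsum, hs']
      have key : Δ (k + 1) * (1 + η / (1 - η)) + K / (q * Real.sqrt (ρ k))
          ≤ K / Real.sqrt (ρ k) := by
        have h1' : 1 + η / (1 - η) = 1 / (1 - η) := by field_simp; ring
        rw [h1']
        have hKeq : K * (1 - 1 / q) = c / (1 - η) := by
          rw [hK, mul_comm (1 - η) (1 - 1/q), div_mul_eq_mul_div, mul_comm c (1 - 1/q),
            mul_div_mul_left c (1 - η) hqq.ne']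
        have hb : Δ (k + 1) * (1 / (1 - η)) ≤ (c / (1 - η)) / Real.sqrt (ρ k) := by
          have : Δ (k + 1) ≤ c / Real.sqrt (ρ k) := hlem'
          rw [div_div, mul_comm (1 - η)]
          rw [← div_div]
          calc Δ (k + 1) * (1 / (1 - η)) ≤ (c / Real.sqrt (ρ k)) * (1 / (1 - η)) := by
                apply mul_le_mul_of_nonneg_right this
                positivity
            _ = c / Real.sqrt (ρ k) / (1 - η) := by ring
        have hc2 : K / (q * Real.sqrt (ρ k)) = K / Real.sqrt (ρ k) * (1 / q) := by
          rw [div_mul_eq_div_div_swap, div_eq_mul_one_div]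
        have : (c / (1 - η)) / Real.sqrt (ρ k) = K / Real.sqrt (ρ k) * (1 - 1 / q) := by
          rw [← hKeq]; ring
        rw [hc2]
        nlinarith [hb, this]
      have hΔη : 0 ≤ Δ k * (η / (1 - η)) := by positivity
      nlinarith [key]
    · have hρ' := hrule2 k hk h2
      simp only [hV, hsum, hρ']
      have : Δ (k + 1) + Δ (k + 1) * (η / (1 - η)) ≤ Δ k * (η / (1 - η)) := by
        have h1' : Δ (k + 1) * (1 + η / (1 - η)) = Δ (k + 1) * (1 / (1 - η)) := by
          field_simp; ring
        have hle : Δ (k + 1) ≤ η * Δ k := le_of_lt h2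
        have := mul_le_mul_of_nonneg_right hle (le_of_lt (by positivity : (0:ℝ) < 1 / (1 - η)))
        calc Δ (k + 1) + Δ (k + 1) * (η / (1 - η)) = Δ (k + 1) * (1 / (1 - η)) := by
              field_simp; ring
          _ ≤ (η * Δ k) * (1 / (1 - η)) := this
          _ = Δ k * (η / (1 - η)) := by ring
      linarith
  have hmono : ∀ N, 1 ≤ N → V N ≤ V 1 := by
    intro N hN
    induction N with
    | zero => omega
    | succ n ih =>
      rcases Nat.eq_zero_or_pos n with h0 | h0
      · subst h0; exact le_rfl
      · exact le_trans (hstep n h0) (ih h0)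
  -- bound on partial sums of the tail
  have hbound : ∀ N, 1 ≤ N → ∑ j ∈ Finset.Icc 2 N, Δ j ≤ V 1 := by
    intro N hN
    have hΔN := hΔpos N hN
    have hρN := hρpos N hN
    have h1 : 0 ≤ Δ N * (η / (1 - η)) := by positivity
    have h2 : 0 ≤ K / Real.sqrt (ρ N) := by positivity
    have hVN : ∑ j ∈ Finset.Icc 2 N, Δ j ≤ V N := by
      simp only [hV]; linarith
    exact le_trans hVN (hmono N hN)
  have hV1 : 0 ≤ V 1 := by
    have h1 : 0 ≤ Δ 1 * (η / (1 - η)) := by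
      have := hΔpos 1 le_rfl; positivity
    have h2 : 0 ≤ K / Real.sqrt (ρ 1) := by
      have := hρpos 1 le_rfl; positivity
    have he : Finset.Icc 2 1 = (∅ : Finset ℕ) := Finset.Icc_eq_empty (by omega)
    simp only [hV, he, Finset.sum_empty]
    linarith
  set B := Δ 1 + V 1 with hB
  have hbound' : ∀ N, ∑ j ∈ Finset.Icc 1 N, Δ j ≤ B := by
    intro N
    rcases Nat.lt_or_ge N 1 with h | h
    · interval_cases N
      have he : Finset.Icc 1 0 = (∅ : Finset ℕ) := Finset.Icc_eq_empty (by omega)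
      rw [he, Finset.sum_empty, hB]
      linarith [hΔpos 1 le_rfl]
    · have hins : Finset.Icc 1 N = insert 1 (Finset.Icc 2 N) := by
        ext x; simp only [Finset.mem_Icc, Finset.mem_insert]; omega
      have hnm : 1 ∉ Finset.Icc 2 N := by simp
      rw [hins, Finset.sum_insert hnm, hB]
      have := hbound N h
      linarith
  have hIcc : ∀ n, ∑ i ∈ Finset.range n, Δ (i + 1) = ∑ j ∈ Finset.Icc 1 n, Δ j := by
    intro n
    induction n with
    | zero => simp
    | succ m ih => rw [Finset.sum_range_succ, ih, Finset.sum_Icc_succ_top (by omega)]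
  -- summability of the tail
  have hsum : Summable (fun i => Δ (i + 1)) := by
    apply summable_of_sum_range_le (c := B)
    · intro n
      exact le_of_lt (hΔpos (n + 1) (by omega))
    · intro n
      rw [hIcc n]
      exact hbound' n
  refine ⟨∑' i, Δ (i + 1), ?_⟩
  have h1 := hsum.hasSum.tendsto_sum_nat
  have heq : (fun N => ∑ k ∈ Finset.Icc 1 N, Δ k)
      = fun N => ∑ i ∈ Finset.range N, Δ (i + 1) := by
    funext N
    rw [hIcc N]
  rw [heq]
  exact h1
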